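/- Fix block data 0 = n_0 < n_1 < … < n_l < n_{l+1} = n and let λ ∈ ℝ^n be constant on each block and dominant (λ_1 ≥ λ_2 ≥ … ≥ λ_n). Then there exists exactly one G/P-ideal filling for λ. -/

import Mathlib

open scoped Classical

noncomputable section

/-- `(i,j) ∈ B_P`: a pair `1 ≤ i < j ≤ n` whose entries lie in different blocks, i.e.
`i ≤ n_r < j` for some `r`. -/
def InBP (n l : ℕ) (nseq : ℕ → ℕ) (i j : ℕ) : Prop :=
  1 ≤ i ∧ i < j ∧ j ≤ n ∧ ∃ r, r ≤ l + 1 ∧ i ≤ nseq r ∧ nseq r < j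

/-- A G/P-ideal filling: a nonnegative real number for each `(i,j) ∈ B_P`, such that for
every `(i,j) ∈ B_P` with `j - i ≥ 2`, `n_{ij}` equals the maximum of those among
`n_{i+1,j}` and `n_{i,j-1}` whose index pair lies in `B_P`. -/
def GPIdealFilling (n l : ℕ) (nseq : ℕ → ℕ) (f : ℕ → ℕ → ℝ) : Prop :=
  (∀ i j, InBP n l nseq i j → 0 ≤ f i j) ∧
  ∀ i j, InBP n l nseq i j → 2 ≤ j - i →
    ((InBP n l nseq (i + 1) j ∧ InBP n l nseq i (j - 1) ∧
        f i j = max (f (i + 1) j) (f i (j - 1))) ∨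
     (InBP n l nseq (i + 1) j ∧ ¬ InBP n l nseq i (j - 1) ∧ f i j = f (i + 1) j) ∨
     (¬ InBP n l nseq (i + 1) j ∧ InBP n l nseq i (j - 1) ∧ f i j = f i (j - 1)))

/-- A G/P-ideal filling for `λ`. -/
def GPIdealFillingFor (n l : ℕ) (nseq : ℕ → ℕ) (lam : ℕ → ℝ) (ell : ℝ)
    (f : ℕ → ℕ → ℝ) : Prop :=
  GPIdealFilling n l nseq f ∧
    ∀ k, 1 ≤ k → k ≤ n →
      (∑ j ∈ Finset.Icc 1 n, if InBP n l nseq k j then f k j else 0)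
        - (∑ i ∈ Finset.Icc 1 n, if InBP n l nseq i k then f i k else 0) + ell = lam k

open Finset

namespace Stmt18Aux


/-- max of `a` over a finite set, with default 0. -/
def vm (a : ℕ → ℝ) (S : Finset ℕ) : ℝ := S.fold max 0 a

lemma vm_nonneg (a : ℕ → ℝ) (S : Finset ℕ) : 0 ≤ vm a S :=
  (Finset.le_fold_max _).2 (Or.inl le_rfl)

lemma le_vm (a : ℕ → ℝ) {S : Finset ℕ} {c : ℕ} (hc : c ∈ S) : a c ≤ vm a S :=
  (Finset.le_fold_max _).2 (Or.inr ⟨c, hc, le_rfl⟩)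

lemma vm_le (a : ℕ → ℝ) {S : Finset ℕ} {M : ℝ} (hM : 0 ≤ M) (h : ∀ c ∈ S, a c ≤ M) :
    vm a S ≤ M := (Finset.fold_max_le _).2 ⟨hM, h⟩

lemma vm_empty (a : ℕ → ℝ) : vm a ∅ = 0 := rfl

lemma vm_singleton {a : ℕ → ℝ} {c : ℕ} (h : 0 ≤ a c) : vm a {c} = a c := by
  simp [vm, Finset.fold_singleton, max_eq_left h]

lemma vm_union (a : ℕ → ℝ) (S T : Finset ℕ) : vm a (S ∪ T) = max (vm a S) (vm a T) := by
  apply le_antisymm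
  · refine (Finset.fold_max_le _).2 ⟨le_max_of_le_left (vm_nonneg a S), fun x hx => ?_⟩
    rcases Finset.mem_union.1 hx with h | h
    · exact le_max_of_le_left (le_vm a h)
    · exact le_max_of_le_right (le_vm a h)
  · refine max_le (vm_le a (vm_nonneg a (S ∪ T)) fun c hc => le_vm a ?_)
      (vm_le a (vm_nonneg a (S ∪ T)) fun c hc => le_vm a ?_)
    · exact Finset.mem_union_left _ hc
    · exact Finset.mem_union_right _ hc

lemma vm_congr {a a' : ℕ → ℝ} {S : Finset ℕ} (h : ∀ c ∈ S, a c = a' c) :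
    vm a S = vm a' S := by
  classical
  induction S using Finset.induction_on with
  | empty => rfl
  | @insert x s hx ih =>
      rw [vm, vm, Finset.fold_insert hx, Finset.fold_insert hx]
      rw [h x (Finset.mem_insert_self x s)]
      have := ih fun c hc => h c (Finset.mem_insert_of_mem hc)
      rw [vm, vm] at this; rw [this]

lemma vm_eq_of {a : ℕ → ℝ} {S : Finset ℕ} {M : ℝ} {q : ℕ} (hq : q ∈ S) (haq : a q = M)
    (hle : ∀ c ∈ S, a c ≤ M) (hM : 0 ≤ M) : vm a S = M :=
  le_antisymm (vm_le a hM hle) (haq ▸ le_vm a hq)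

def wset (W : Finset ℕ) (i j : ℕ) : Finset ℕ := W.filter fun c => i ≤ c ∧ c < j

def vmax (W : Finset ℕ) (a : ℕ → ℝ) (i j : ℕ) : ℝ := vm a (wset W i j)

/-- average of `lam` over `(u, v]`. -/
def lellr (lam : ℕ → ℝ) (u v : ℕ) : ℝ := (∑ i ∈ Finset.Ioc u v, lam i) / ((v : ℝ) - u)

def Cond (W : Finset ℕ) (a : ℕ → ℝ) (u v : ℕ) (lam : ℕ → ℝ) : Prop :=
  ∀ k ∈ Finset.Ioc u v,
    (∑ j ∈ Finset.Ioc k v, vmax W a k j)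
      - (∑ i ∈ Finset.Ioo u k, vmax W a i k) + lellr lam u v = lam k

def Csum (lam : ℕ → ℝ) (u v c : ℕ) : ℝ :=
  (∑ k ∈ Finset.Ioc u c, lam k) - ((c : ℝ) - u) * lellr lam u v

/-- triangle sum swap -/
lemma tri_swap (F : ℕ → ℕ → ℝ) (A B : ℕ) :
    ∑ x ∈ Finset.Ioc A B, ∑ y ∈ Finset.Ioc x B, F x y
      = ∑ y ∈ Finset.Ioc A B, ∑ x ∈ Finset.Ioo A y, F x y := by
  refine Finset.sum_comm' ?_
  intro x y
  simp only [Finset.mem_Ioc, Finset.mem_Ioo]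
  omega

/-- Summing the conditions over a prefix `(u, c]`. -/
lemma prefix_id {W : Finset ℕ} {a : ℕ → ℝ} {u v : ℕ} {lam : ℕ → ℝ}
    (h : Cond W a u v lam) {c : ℕ} (h1 : u ≤ c) (h2 : c ≤ v) :
    ∑ i ∈ Finset.Ioc u c, ∑ j ∈ Finset.Ioc c v, vmax W a i j = Csum lam u v c := by
  have hsum : ∑ k ∈ Finset.Ioc u c, lam k
      = ∑ k ∈ Finset.Ioc u c, ((∑ j ∈ Finset.Ioc k v, vmax W a k j)
        - (∑ i ∈ Finset.Ioo u k, vmax W a i k) + lellr lam u v) := by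
    refine Finset.sum_congr rfl fun k hk => ?_
    have hk' : k ∈ Finset.Ioc u v := by
      simp only [Finset.mem_Ioc] at hk ⊢; omega
    exact (h k hk').symm
  have hs : (∑ k ∈ Finset.Ioc u c, ∑ j ∈ Finset.Ioc k v, vmax W a k j)
      = (∑ k ∈ Finset.Ioc u c, ∑ j ∈ Finset.Ioc k c, vmax W a k j)
        + ∑ k ∈ Finset.Ioc u c, ∑ j ∈ Finset.Ioc c v, vmax W a k j := by
    rw [← Finset.sum_add_distrib]
    exact Finset.sum_congr rfl fun k hk => by
      rw [Finset.sum_Ioc_consecutive _ (Finset.mem_Ioc.1 hk).2 h2]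
  have htri := tri_swap (fun i j => vmax W a i j) u c
  have hcard : ((Finset.Ioc u c).card : ℝ) = (c : ℝ) - u := by
    rw [Nat.card_Ioc]; push_cast [Nat.cast_sub h1]; ring
  rw [Finset.sum_add_distrib, Finset.sum_sub_distrib, hs, htri,
    Finset.sum_const, nsmul_eq_mul, hcard] at hsum
  rw [Csum]
  linarith



lemma chain_le {lam : ℕ → ℝ} {u v : ℕ}
    (hdom : ∀ k, u < k → k + 1 ≤ v → lam (k + 1) ≤ lam k) :
    ∀ i k, u < i → i ≤ k → k ≤ v → lam k ≤ lam i := by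
  intro i k hui hik hkv
  induction k with
  | zero => omega
  | succ m ih =>
      rcases Nat.lt_or_ge i (m+1) with h | h
      · have : lam m ≤ lam i := ih (by omega) (by omega)
        have := hdom m (by omega) (by omega)
        linarith
      · have : i = m + 1 := by omega
        rw [this]

lemma const_all {lam : ℕ → ℝ} {u v : ℕ}
    (hconst : ∀ k, u < k → k + 1 ≤ v → lam k = lam (k + 1)) :
    ∀ k, u < k → k ≤ v → lam k = lam (u + 1) := by
  intro k hk hkv
  induction k with
  | zero => omega
  | succ m ih =>
      rcases Nat.lt_or_ge u m with h | h
      · have h1 : lam m = lam (u+1) := ih (by omega) (by omega)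
        have h2 : lam m = lam (m+1) := hconst m (by omega) (by omega)
        rw [← h2, h1]
      · have : m = u := by omega
        rw [this]

lemma card_Ioc_real {u c : ℕ} (h : u ≤ c) : ((Finset.Ioc u c).card : ℝ) = (c:ℝ) - u := by
  rw [Nat.card_Ioc]; push_cast [Nat.cast_sub h]; ring

lemma lellr_mul {lam : ℕ → ℝ} {u v : ℕ} (h : u < v) :
    ((v : ℝ) - u) * lellr lam u v = ∑ i ∈ Finset.Ioc u v, lam i := by
  have : (v:ℝ) - u ≠ 0 := by
    have : (u:ℝ) < v := by exact_mod_cast h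
    linarith
  rw [lellr]; field_simp

lemma csum_nonneg {lam : ℕ → ℝ} {u v : ℕ} (huv : u < v)
    (hdom : ∀ k, u < k → k + 1 ≤ v → lam (k + 1) ≤ lam k)
    {c : ℕ} (h1 : u ≤ c) (h2 : c ≤ v) : 0 ≤ Csum lam u v c := by
  have hvu : (0:ℝ) < (v:ℝ) - u := by
    have : (u:ℝ) < v := by exact_mod_cast huv
    linarith
  rcases eq_or_lt_of_le h1 with rfl | hc1
  · simp [Csum]
  rcases eq_or_lt_of_le h2 with rfl | hc2
  · rw [Csum, ← lellr_mul huv]; ring_nf; simp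
  -- generic u < c < v
  have hsplit : (∑ k ∈ Finset.Ioc u c, lam k) + ∑ k ∈ Finset.Ioc c v, lam k
      = ∑ k ∈ Finset.Ioc u v, lam k := Finset.sum_Ioc_consecutive _ h1 h2
  have hS1 : ((c:ℝ) - u) * lam c ≤ ∑ k ∈ Finset.Ioc u c, lam k := by
    have := Finset.card_nsmul_le_sum (Finset.Ioc u c) lam (lam c)
      (fun k hk => by
        have hk' := Finset.mem_Ioc.1 hk
        exact chain_le hdom k c hk'.1 hk'.2 (le_of_lt hc2))
    rwa [nsmul_eq_mul, card_Ioc_real h1] at this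
  have hS2 : (∑ k ∈ Finset.Ioc c v, lam k) ≤ ((v:ℝ) - c) * lam c := by
    have := Finset.sum_le_card_nsmul (Finset.Ioc c v) lam (lam c)
      (fun k hk => by
        have hk' := Finset.mem_Ioc.1 hk
        exact chain_le hdom c k hc1 (le_of_lt hk'.1) hk'.2)
    rwa [nsmul_eq_mul, card_Ioc_real h2] at this
  have hcu : (0:ℝ) < (c:ℝ) - u := by
    have : (u:ℝ) < c := by exact_mod_cast hc1
    linarith
  have hvc : (0:ℝ) < (v:ℝ) - c := by
    have : (c:ℝ) < v := by exact_mod_cast hc2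
    linarith
  have hl := lellr_mul (lam := lam) huv
  rw [Csum]
  have key : ((v:ℝ) - u) * (((c:ℝ) - u) * lellr lam u v) ≤ ((v:ℝ)-u) * ∑ k ∈ Finset.Ioc u c, lam k := by
    have e1 : ((v:ℝ) - u) * (((c:ℝ) - u) * lellr lam u v)
        = ((c:ℝ) - u) * (((v:ℝ)-u) * lellr lam u v) := by ring
    rw [e1, hl, ← hsplit]
    nlinarith [hS1, hS2]
  nlinarith [key]

lemma ale {W : Finset ℕ} {a : ℕ → ℝ} {u v : ℕ} {lam : ℕ → ℝ}
    (h : Cond W a u v lam) (hW : ∀ c ∈ W, u < c ∧ c < v) {c : ℕ} (hc : c ∈ W) :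
    ((c:ℝ) - u) * ((v:ℝ) - c) * a c ≤ Csum lam u v c := by
  obtain ⟨h1, h2⟩ := hW c hc
  rw [← prefix_id h (le_of_lt h1) (le_of_lt h2)]
  have hbound : ∀ i ∈ Finset.Ioc u c, ∀ j ∈ Finset.Ioc c v, a c ≤ vmax W a i j := by
    intro i hi j hj
    apply le_vm
    rw [wset, Finset.mem_filter]
    exact ⟨hc, (Finset.mem_Ioc.1 hi).2, (Finset.mem_Ioc.1 hj).1⟩
  have step1 : ∀ i ∈ Finset.Ioc u c,
      ((v:ℝ) - c) * a c ≤ ∑ j ∈ Finset.Ioc c v, vmax W a i j := by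
    intro i hi
    have := Finset.card_nsmul_le_sum (Finset.Ioc c v) (fun j => vmax W a i j) (a c)
      (fun j hj => hbound i hi j hj)
    rwa [nsmul_eq_mul, card_Ioc_real (le_of_lt h2)] at this
  have := Finset.card_nsmul_le_sum (Finset.Ioc u c)
    (fun i => ∑ j ∈ Finset.Ioc c v, vmax W a i j) (((v:ℝ) - c) * a c) step1
  rw [nsmul_eq_mul, card_Ioc_real (le_of_lt h1)] at this
  calc ((c:ℝ) - u) * ((v:ℝ) - c) * a c = ((c:ℝ) - u) * (((v:ℝ) - c) * a c) := by ring
  _ ≤ _ := this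

lemma wset_self {W : Finset ℕ} {q : ℕ} (hq : q ∈ W) : wset W q (q + 1) = {q} := by
  ext c
  simp only [wset, Finset.mem_filter, Finset.mem_singleton]
  constructor
  · rintro ⟨_, h1, h2⟩; omega
  · rintro rfl; exact ⟨hq, le_rfl, by omega⟩

lemma vmax_le {W : Finset ℕ} {a : ℕ → ℝ} {M : ℝ} (hM : 0 ≤ M)
    (h : ∀ c ∈ W, a c ≤ M) (i j : ℕ) : vmax W a i j ≤ M :=
  vm_le a hM fun c hc => h c (Finset.mem_filter.1 hc).1

/-- If all entries are `≤ B` and the prefix sum at `q` equals its max possible value, then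
all crossing `vmax` values equal `B`. -/
lemma crossing_eq {W : Finset ℕ} {a : ℕ → ℝ} {u v : ℕ} {lam : ℕ → ℝ}
    (h : Cond W a u v lam) {B : ℝ} (hB : 0 ≤ B) (hle : ∀ c ∈ W, a c ≤ B)
    {q : ℕ} (hq1 : u < q) (hq2 : q < v)
    (hCq : Csum lam u v q = ((q:ℝ) - u) * ((v:ℝ) - q) * B) :
    ∀ i ∈ Finset.Ioc u q, ∀ j ∈ Finset.Ioc q v, vmax W a i j = B := by
  have hpre := prefix_id h (le_of_lt hq1) (le_of_lt hq2)
  have hub : ∀ i ∈ Finset.Ioc u q, ∀ j ∈ Finset.Ioc q v, vmax W a i j ≤ B :=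
    fun i _ j _ => vmax_le hB hle i j
  have hzero : ∑ i ∈ Finset.Ioc u q, ∑ j ∈ Finset.Ioc q v, (B - vmax W a i j) = 0 := by
    have e : ∀ i ∈ Finset.Ioc u q, ∑ j ∈ Finset.Ioc q v, (B - vmax W a i j)
        = ((v:ℝ) - q) * B - ∑ j ∈ Finset.Ioc q v, vmax W a i j := by
      intro i _
      rw [Finset.sum_sub_distrib, Finset.sum_const, nsmul_eq_mul, card_Ioc_real (le_of_lt hq2)]
    rw [Finset.sum_congr rfl e, Finset.sum_sub_distrib, hpre, Finset.sum_const,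
      nsmul_eq_mul, card_Ioc_real (le_of_lt hq1), hCq]
    ring
  have hall := (Finset.sum_eq_zero_iff_of_nonneg (fun i hi =>
    Finset.sum_nonneg fun j hj => by linarith [hub i hi j hj])).1 hzero
  intro i hi j hj
  have := (Finset.sum_eq_zero_iff_of_nonneg (fun j hj => by
    linarith [hub i hi j hj])).1 (hall i hi) j hj
  linarith

lemma cast_lt {x y : ℕ} (h : x < y) : (x:ℝ) < y := by exact_mod_cast h

lemma csum_split {lam : ℕ → ℝ} {u v q c : ℕ} (hq1 : u < q) (hq2 : q < v)
    (hc1 : u ≤ c) (hc2 : c ≤ q) {B : ℝ}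
    (hCq : Csum lam u v q = ((q:ℝ) - u) * ((v:ℝ) - q) * B) :
    Csum lam u q c = Csum lam u v c - ((c:ℝ) - u) * ((v:ℝ) - q) * B := by
  have hqu : (0:ℝ) < (q:ℝ) - u := by have := cast_lt hq1; linarith
  have hvq : (0:ℝ) < (v:ℝ) - q := by have := cast_lt hq2; linarith
  -- lellr lam u q = lellr lam u v + (v - q) * B
  have hL : lellr lam u q = lellr lam u v + ((v:ℝ) - q) * B := by
    have h1 : ((q:ℝ) - u) * lellr lam u q = ∑ i ∈ Finset.Ioc u q, lam i := lellr_mul hq1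
    have h2 : (∑ i ∈ Finset.Ioc u q, lam i)
        = ((q:ℝ) - u) * lellr lam u v + ((q:ℝ) - u) * ((v:ℝ) - q) * B := by
      have := hCq; rw [Csum] at this; linarith
    have : ((q:ℝ) - u) * lellr lam u q = ((q:ℝ) - u) * (lellr lam u v + ((v:ℝ) - q) * B) := by
      rw [h1, h2]; ring
    exact mul_left_cancel₀ (ne_of_gt hqu) this
  rw [Csum, Csum, hL]; ring

lemma csum_split_right {lam : ℕ → ℝ} {u v q c : ℕ} (hq1 : u < q) (hq2 : q < v)
    (hc1 : q ≤ c) (hc2 : c ≤ v) {B : ℝ}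
    (hCq : Csum lam u v q = ((q:ℝ) - u) * ((v:ℝ) - q) * B) :
    Csum lam q v c = Csum lam u v c - ((v:ℝ) - c) * ((q:ℝ) - u) * B := by
  have hqu : (0:ℝ) < (q:ℝ) - u := by have := cast_lt hq1; linarith
  have hvq : (0:ℝ) < (v:ℝ) - q := by have := cast_lt hq2; linarith
  have hR : lellr lam q v = lellr lam u v - ((q:ℝ) - u) * B := by
    have h1 : ((v:ℝ) - q) * lellr lam q v = ∑ i ∈ Finset.Ioc q v, lam i := lellr_mul hq2
    have h2 : (∑ i ∈ Finset.Ioc u q, lam i) + ∑ i ∈ Finset.Ioc q v, lam i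
        = ∑ i ∈ Finset.Ioc u v, lam i := Finset.sum_Ioc_consecutive _ (le_of_lt hq1) (le_of_lt hq2)
    have h3 : (∑ i ∈ Finset.Ioc u q, lam i)
        = ((q:ℝ) - u) * lellr lam u v + ((q:ℝ) - u) * ((v:ℝ) - q) * B := by
      have := hCq; rw [Csum] at this; linarith
    have h4 : ((v:ℝ) - u) * lellr lam u v = ∑ i ∈ Finset.Ioc u v, lam i :=
      lellr_mul (lt_trans hq1 hq2)
    have : ((v:ℝ) - q) * lellr lam q v = ((v:ℝ) - q) * (lellr lam u v - ((q:ℝ) - u) * B) := by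
      rw [h1]
      have : (∑ i ∈ Finset.Ioc q v, lam i)
          = ((v:ℝ) - u) * lellr lam u v - ∑ i ∈ Finset.Ioc u q, lam i := by
        rw [h4]; linarith
      rw [this, h3]; ring
    exact mul_left_cancel₀ (ne_of_gt hvq) this
  have hsum : (∑ i ∈ Finset.Ioc q c, lam i)
      = (∑ i ∈ Finset.Ioc u c, lam i) - ∑ i ∈ Finset.Ioc u q, lam i := by
    have := Finset.sum_Ioc_consecutive lam (le_of_lt hq1) hc1
    linarith
  have h3 : (∑ i ∈ Finset.Ioc u q, lam i)
      = ((q:ℝ) - u) * lellr lam u v + ((q:ℝ) - u) * ((v:ℝ) - q) * B := by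
    have := hCq; rw [Csum] at this; linarith
  rw [Csum, Csum, hR, hsum, h3]; ring


lemma lellr_left_eq {lam : ℕ → ℝ} {u v q : ℕ} (hq1 : u < q) (hq2 : q < v) {B : ℝ}
    (hCq : Csum lam u v q = ((q:ℝ) - u) * ((v:ℝ) - q) * B) :
    lellr lam u q = lellr lam u v + ((v:ℝ) - q) * B := by
  have hqu : (0:ℝ) < (q:ℝ) - u := by have := cast_lt hq1; linarith
  have h1 : ((q:ℝ) - u) * lellr lam u q = ∑ i ∈ Finset.Ioc u q, lam i := lellr_mul hq1
  have h2 : (∑ i ∈ Finset.Ioc u q, lam i)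
      = ((q:ℝ) - u) * lellr lam u v + ((q:ℝ) - u) * ((v:ℝ) - q) * B := by
    have := hCq; rw [Csum] at this; linarith
  have : ((q:ℝ) - u) * lellr lam u q = ((q:ℝ) - u) * (lellr lam u v + ((v:ℝ) - q) * B) := by
    rw [h1, h2]; ring
  exact mul_left_cancel₀ (ne_of_gt hqu) this

lemma lellr_right_eq {lam : ℕ → ℝ} {u v q : ℕ} (hq1 : u < q) (hq2 : q < v) {B : ℝ}
    (hCq : Csum lam u v q = ((q:ℝ) - u) * ((v:ℝ) - q) * B) :
    lellr lam q v = lellr lam u v - ((q:ℝ) - u) * B := by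
  have hvq : (0:ℝ) < (v:ℝ) - q := by have := cast_lt hq2; linarith
  have h1 : ((v:ℝ) - q) * lellr lam q v = ∑ i ∈ Finset.Ioc q v, lam i := lellr_mul hq2
  have h2 : (∑ i ∈ Finset.Ioc u q, lam i) + ∑ i ∈ Finset.Ioc q v, lam i
      = ∑ i ∈ Finset.Ioc u v, lam i := Finset.sum_Ioc_consecutive _ (le_of_lt hq1) (le_of_lt hq2)
  have h3 : (∑ i ∈ Finset.Ioc u q, lam i)
      = ((q:ℝ) - u) * lellr lam u v + ((q:ℝ) - u) * ((v:ℝ) - q) * B := by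
    have := hCq; rw [Csum] at this; linarith
  have h4 : ((v:ℝ) - u) * lellr lam u v = ∑ i ∈ Finset.Ioc u v, lam i :=
    lellr_mul (lt_trans hq1 hq2)
  have : ((v:ℝ) - q) * lellr lam q v = ((v:ℝ) - q) * (lellr lam u v - ((q:ℝ) - u) * B) := by
    rw [h1]
    have h5 : (∑ i ∈ Finset.Ioc q v, lam i)
        = ((v:ℝ) - u) * lellr lam u v - ∑ i ∈ Finset.Ioc u q, lam i := by
      rw [h4]; linarith
    rw [h5, h3]; ring
  exact mul_left_cancel₀ (ne_of_gt hvq) this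

lemma Ioo_eq_Ioc {u k : ℕ} (h : 1 ≤ k) : Finset.Ioo u k = Finset.Ioc u (k - 1) := by
  ext c; simp only [Finset.mem_Ioo, Finset.mem_Ioc]; omega

/-- base case: no walls. -/
lemma core_empty {u v : ℕ} (huv : u < v) {lam : ℕ → ℝ}
    (hconst : ∀ k, u < k → k + 1 ≤ v → lam k = lam (k + 1)) (a : ℕ → ℝ) :
    Cond ∅ a u v lam := by
  intro k hk
  obtain ⟨hk1, hk2⟩ := Finset.mem_Ioc.1 hk
  have hv0 : ∀ i j : ℕ, vmax ∅ a i j = 0 := by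
    intro i j; rw [vmax, wset, Finset.filter_empty]; rfl
  rw [Finset.sum_congr rfl fun j _ => hv0 k j, Finset.sum_congr rfl fun i _ => hv0 i k]
  simp only [Finset.sum_const_zero]
  have hconstk : ∀ k, u < k → k ≤ v → lam k = lam (u + 1) := const_all hconst
  have hsum : (∑ i ∈ Finset.Ioc u v, lam i) = ((v:ℝ) - u) * lam (u + 1) := by
    rw [Finset.sum_congr rfl fun i hi =>
      hconstk i (Finset.mem_Ioc.1 hi).1 (Finset.mem_Ioc.1 hi).2]
    rw [Finset.sum_const, nsmul_eq_mul, card_Ioc_real (le_of_lt huv)]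
  have hvu : (0:ℝ) < (v:ℝ) - u := by have := cast_lt huv; linarith
  rw [lellr, hsum, hconstk k hk1 hk2]
  field_simp
  ring

lemma core (N : ℕ) : ∀ (W : Finset ℕ), W.card ≤ N → ∀ (u v : ℕ), u < v →
    (∀ c ∈ W, u < c ∧ c < v) → ∀ (lam : ℕ → ℝ),
    (∀ k, u < k → k + 1 ≤ v → k ∉ W → lam k = lam (k + 1)) →
    (∀ k, u < k → k + 1 ≤ v → lam (k + 1) ≤ lam k) →
    ∃ a : ℕ → ℝ, (∀ c ∈ W, 0 ≤ a c) ∧ Cond W a u v lam ∧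
      ∀ a' : ℕ → ℝ, (∀ c ∈ W, 0 ≤ a' c) → Cond W a' u v lam → ∀ c ∈ W, a' c = a c := by
  induction N with
  | zero =>
      intro W hcard u v huv hW lam hconst hdom
      have hWe : W = ∅ := Finset.card_eq_zero.1 (Nat.le_zero.1 hcard)
      subst hWe
      exact ⟨fun _ => 0, fun c hc => absurd hc (Finset.notMem_empty c),
        core_empty huv (fun k h1 h2 => hconst k h1 h2 (Finset.notMem_empty k)) _,
        fun a' _ _ c hc => absurd hc (Finset.notMem_empty c)⟩
  | succ M ih =>
      intro W hcard u v huv hW lam hconst hdom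
      rcases W.eq_empty_or_nonempty with rfl | hne
      · exact ⟨fun _ => 0, fun c hc => absurd hc (Finset.notMem_empty c),
          core_empty huv (fun k h1 h2 => hconst k h1 h2 (Finset.notMem_empty k)) _,
          fun a' _ _ c hc => absurd hc (Finset.notMem_empty c)⟩
      obtain ⟨q, hqW, hqmax⟩ := Finset.exists_max_image W
        (fun c => Csum lam u v c / (((c:ℝ) - u) * ((v:ℝ) - c))) hne
      obtain ⟨hq1, hq2⟩ := hW q hqW
      have hqu : (0:ℝ) < (q:ℝ) - u := by have := cast_lt hq1; linarith
      have hvq : (0:ℝ) < (v:ℝ) - q := by have := cast_lt hq2; linarith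
      set B : ℝ := Csum lam u v q / (((q:ℝ) - u) * ((v:ℝ) - q)) with hBdef
      have hCqB : Csum lam u v q = ((q:ℝ) - u) * ((v:ℝ) - q) * B := by
        rw [hBdef]; field_simp
      have hB0 : 0 ≤ B := div_nonneg
        (csum_nonneg huv hdom (le_of_lt hq1) (le_of_lt hq2)) (le_of_lt (mul_pos hqu hvq))
      have hCle : ∀ c ∈ W, Csum lam u v c ≤ ((c:ℝ) - u) * ((v:ℝ) - c) * B := by
        intro c hc
        obtain ⟨hc1, hc2⟩ := hW c hc
        have hcu : (0:ℝ) < (c:ℝ) - u := by have := cast_lt hc1; linarith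
        have hvc : (0:ℝ) < (v:ℝ) - c := by have := cast_lt hc2; linarith
        have h := hqmax c hc
        rw [div_le_iff₀ (mul_pos hcu hvc)] at h
        calc Csum lam u v c ≤ B * (((c:ℝ) - u) * ((v:ℝ) - c)) := h
        _ = ((c:ℝ) - u) * ((v:ℝ) - c) * B := by ring
      -- subproblems
      set WL : Finset ℕ := W.filter (fun c => c < q) with hWLdef
      set WR : Finset ℕ := W.filter (fun c => q < c) with hWRdef
      have hWLmem : ∀ c, c ∈ WL ↔ c ∈ W ∧ c < q := by
        intro c; rw [hWLdef, Finset.mem_filter]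
      have hWRmem : ∀ c, c ∈ WR ↔ c ∈ W ∧ q < c := by
        intro c; rw [hWRdef, Finset.mem_filter]
      have hcardL : WL.card ≤ M := by
        have hsub : WL ⊆ W.erase q := by
          intro c hc
          rw [Finset.mem_erase]
          obtain ⟨h1, h2⟩ := (hWLmem c).1 hc
          exact ⟨by omega, h1⟩
        have h1 := Finset.card_le_card hsub
        rw [Finset.card_erase_of_mem hqW] at h1
        have h2 := Finset.card_pos.2 hne
        omega
      have hcardR : WR.card ≤ M := by
        have hsub : WR ⊆ W.erase q := by
          intro c hc
          rw [Finset.mem_erase]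
          obtain ⟨h1, h2⟩ := (hWRmem c).1 hc
          exact ⟨by omega, h1⟩
        have h1 := Finset.card_le_card hsub
        rw [Finset.card_erase_of_mem hqW] at h1
        have h2 := Finset.card_pos.2 hne
        omega
      have hWL : ∀ c ∈ WL, u < c ∧ c < q := by
        intro c hc
        obtain ⟨h1, h2⟩ := (hWLmem c).1 hc
        exact ⟨(hW c h1).1, h2⟩
      have hWR : ∀ c ∈ WR, q < c ∧ c < v := by
        intro c hc
        obtain ⟨h1, h2⟩ := (hWRmem c).1 hc
        exact ⟨h2, (hW c h1).2⟩
      obtain ⟨aL, haL0, hcondL, huniqL⟩ := ih WL hcardL u q hq1 hWL lam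
        (fun k h1 h2 hk => hconst k h1 (by omega) (fun hkW => hk ((hWLmem k).2 ⟨hkW, by omega⟩)))
        (fun k h1 h2 => hdom k h1 (by omega))
      obtain ⟨aR, haR0, hcondR, huniqR⟩ := ih WR hcardR q v hq2 hWR lam
        (fun k h1 h2 hk => hconst k (by omega) h2 (fun hkW => hk ((hWRmem k).2 ⟨hkW, by omega⟩)))
        (fun k h1 h2 => hdom k (by omega) h2)
      set a : ℕ → ℝ := fun c => if c < q then aL c else if c = q then B else aR c with hadef
      have haLeq : ∀ c, c < q → a c = aL c := by intro c h; rw [hadef]; simp [h]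
      have haReq : ∀ c, q < c → a c = aR c := by
        intro c h; rw [hadef]; simp [Nat.lt_asymm h, Nat.ne_of_gt h]
      have haq : a q = B := by rw [hadef]; simp
      -- bounds on subproblem solutions
      have haLB : ∀ c ∈ WL, aL c ≤ B := by
        intro c hc
        obtain ⟨hc1, hc2⟩ := hWL c hc
        have hcW : c ∈ W := ((hWLmem c).1 hc).1
        have hcu : (0:ℝ) < (c:ℝ) - u := by have := cast_lt hc1; linarith
        have hqc : (0:ℝ) < (q:ℝ) - c := by have := cast_lt hc2; linarith
        have h1 := ale hcondL hWL hc
        have h2 := csum_split hq1 hq2 (le_of_lt hc1) (le_of_lt hc2) hCqB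
        have h3 := hCle c hcW
        nlinarith [mul_pos hcu hqc]
      have haRB : ∀ c ∈ WR, aR c ≤ B := by
        intro c hc
        obtain ⟨hc1, hc2⟩ := hWR c hc
        have hcW : c ∈ W := ((hWRmem c).1 hc).1
        have hcq : (0:ℝ) < (c:ℝ) - q := by have := cast_lt hc1; linarith
        have hvc : (0:ℝ) < (v:ℝ) - c := by have := cast_lt hc2; linarith
        have h1 := ale hcondR hWR hc
        have h2 := csum_split_right hq1 hq2 (le_of_lt hc1) (le_of_lt hc2) hCqB
        have h3 := hCle c hcW
        nlinarith [mul_pos hcq hvc]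
      have haleB : ∀ c ∈ W, a c ≤ B := by
        intro c hc
        rcases lt_trichotomy c q with h | h | h
        · rw [haLeq c h]; exact haLB c ((hWLmem c).2 ⟨hc, h⟩)
        · rw [h, haq]
        · rw [haReq c h]; exact haRB c ((hWRmem c).2 ⟨hc, h⟩)
      have ha0 : ∀ c ∈ W, 0 ≤ a c := by
        intro c hc
        rcases lt_trichotomy c q with h | h | h
        · rw [haLeq c h]; exact haL0 c ((hWLmem c).2 ⟨hc, h⟩)
        · rw [h, haq]; exact hB0
        · rw [haReq c h]; exact haR0 c ((hWRmem c).2 ⟨hc, h⟩)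
      -- crossing values
      have hcross : ∀ i j, i ≤ q → q < j → vmax W a i j = B := by
        intro i j hi hj
        refine vm_eq_of ?_ haq (fun c hc => haleB c (Finset.mem_filter.1 hc).1) hB0
        rw [wset, Finset.mem_filter]
        exact ⟨hqW, hi, hj⟩
      -- wset transfer
      have hwsetL : ∀ (i j : ℕ), j ≤ q → wset W i j = wset WL i j := by
        intro i j hj
        ext c
        simp only [wset, hWLdef, Finset.mem_filter]
        constructor
        · rintro ⟨h1, h2, h3⟩; exact ⟨⟨h1, by omega⟩, h2, h3⟩
        · rintro ⟨⟨h1, _⟩, h2, h3⟩; exact ⟨h1, h2, h3⟩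
      have hwsetR : ∀ (i j : ℕ), q < i → wset W i j = wset WR i j := by
        intro i j hi
        ext c
        simp only [wset, hWRdef, Finset.mem_filter]
        constructor
        · rintro ⟨h1, h2, h3⟩; exact ⟨⟨h1, by omega⟩, h2, h3⟩
        · rintro ⟨⟨h1, _⟩, h2, h3⟩; exact ⟨h1, h2, h3⟩
      have hvL : ∀ (i j : ℕ), j ≤ q → vmax W a i j = vmax WL aL i j := by
        intro i j hj
        rw [vmax, vmax, hwsetL i j hj]
        exact vm_congr (fun c hc => haLeq c (by
          have := (Finset.mem_filter.1 hc).2; omega))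
      have hvR : ∀ (i j : ℕ), q < i → vmax W a i j = vmax WR aR i j := by
        intro i j hi
        rw [vmax, vmax, hwsetR i j hi]
        exact vm_congr (fun c hc => haReq c (by
          have h1 := (Finset.mem_filter.1 hc).2; omega))
      have hlelL := lellr_left_eq hq1 hq2 hCqB
      have hlelR := lellr_right_eq hq1 hq2 hCqB
      -- the constructed a satisfies Cond
      have hcond : Cond W a u v lam := by
        intro k hk
        obtain ⟨hk1, hk2⟩ := Finset.mem_Ioc.1 hk
        rcases le_or_gt k q with hkq | hqk
        · have hrow : (∑ j ∈ Finset.Ioc k v, vmax W a k j)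
              = (∑ j ∈ Finset.Ioc k q, vmax WL aL k j) + ((v:ℝ) - q) * B := by
            rw [← Finset.sum_Ioc_consecutive (fun j => vmax W a k j) hkq (le_of_lt hq2)]
            congr 1
            · exact Finset.sum_congr rfl fun j hj => hvL k j (Finset.mem_Ioc.1 hj).2
            · rw [Finset.sum_congr rfl fun j hj => hcross k j hkq (Finset.mem_Ioc.1 hj).1,
                Finset.sum_const, nsmul_eq_mul, card_Ioc_real (le_of_lt hq2)]
          have hcol : (∑ i ∈ Finset.Ioo u k, vmax W a i k)
              = ∑ i ∈ Finset.Ioo u k, vmax WL aL i k :=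
            Finset.sum_congr rfl fun i _ => hvL i k hkq
          have hL := hcondL k (Finset.mem_Ioc.2 ⟨hk1, hkq⟩)
          rw [hlelL] at hL
          rw [hrow, hcol]
          linarith
        · have hrow : (∑ j ∈ Finset.Ioc k v, vmax W a k j)
              = ∑ j ∈ Finset.Ioc k v, vmax WR aR k j :=
            Finset.sum_congr rfl fun j _ => hvR k j hqk
          have hcol : (∑ i ∈ Finset.Ioo u k, vmax W a i k)
              = ((q:ℝ) - u) * B + ∑ i ∈ Finset.Ioo q k, vmax WR aR i k := by
            rw [Ioo_eq_Ioc (by omega : 1 ≤ k),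
              ← Finset.sum_Ioc_consecutive (fun i => vmax W a i k) (le_of_lt hq1)
                (by omega : q ≤ k - 1)]
            congr 1
            · rw [Finset.sum_congr rfl fun i hi =>
                hcross i k (Finset.mem_Ioc.1 hi).2 hqk,
                Finset.sum_const, nsmul_eq_mul, card_Ioc_real (le_of_lt hq1)]
            · rw [← Ioo_eq_Ioc (by omega : 1 ≤ k)]
              exact Finset.sum_congr rfl fun i hi => hvR i k (Finset.mem_Ioo.1 hi).1
          have hR := hcondR k (Finset.mem_Ioc.2 ⟨hqk, hk2⟩)
          rw [hlelR] at hR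
          rw [hrow, hcol]
          linarith
      refine ⟨a, ha0, hcond, ?_⟩
      -- uniqueness
      intro a' ha'0 hcond' c hc
      have ha'le : ∀ c ∈ W, a' c ≤ B := by
        intro c hc
        obtain ⟨hc1, hc2⟩ := hW c hc
        have hcu : (0:ℝ) < (c:ℝ) - u := by have := cast_lt hc1; linarith
        have hvc : (0:ℝ) < (v:ℝ) - c := by have := cast_lt hc2; linarith
        have h1 := ale hcond' hW hc
        have h2 := hCle c hc
        nlinarith [mul_pos hcu hvc]
      have hcr' := crossing_eq hcond' hB0 ha'le hq1 hq2 hCqB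
      have ha'q : a' q = B := by
        have h := hcr' q (Finset.mem_Ioc.2 ⟨hq1, le_rfl⟩) (q + 1)
          (Finset.mem_Ioc.2 ⟨by omega, by omega⟩)
        rwa [vmax, wset_self hqW, vm_singleton (ha'0 q hqW)] at h
      have hcondL' : Cond WL a' u q lam := by
        intro k hk
        obtain ⟨hk1, hkq⟩ := Finset.mem_Ioc.1 hk
        have h := hcond' k (Finset.mem_Ioc.2 ⟨hk1, by omega⟩)
        have hrow : (∑ j ∈ Finset.Ioc k v, vmax W a' k j)
            = (∑ j ∈ Finset.Ioc k q, vmax WL a' k j) + ((v:ℝ) - q) * B := by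
          rw [← Finset.sum_Ioc_consecutive (fun j => vmax W a' k j) hkq (le_of_lt hq2)]
          congr 1
          · exact Finset.sum_congr rfl fun j hj => by
              rw [vmax, vmax, hwsetL k j (Finset.mem_Ioc.1 hj).2]
          · rw [Finset.sum_congr rfl fun j hj =>
              hcr' k (Finset.mem_Ioc.2 ⟨hk1, hkq⟩) j hj,
              Finset.sum_const, nsmul_eq_mul, card_Ioc_real (le_of_lt hq2)]
        have hcol : (∑ i ∈ Finset.Ioo u k, vmax W a' i k)
            = ∑ i ∈ Finset.Ioo u k, vmax WL a' i k :=
          Finset.sum_congr rfl fun i _ => by rw [vmax, vmax, hwsetL i k hkq]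
        rw [hrow, hcol] at h
        rw [hlelL]
        linarith
      have hcondR' : Cond WR a' q v lam := by
        intro k hk
        obtain ⟨hqk, hk2⟩ := Finset.mem_Ioc.1 hk
        have h := hcond' k (Finset.mem_Ioc.2 ⟨by omega, hk2⟩)
        have hrow : (∑ j ∈ Finset.Ioc k v, vmax W a' k j)
            = ∑ j ∈ Finset.Ioc k v, vmax WR a' k j :=
          Finset.sum_congr rfl fun j _ => by rw [vmax, vmax, hwsetR k j hqk]
        have hcol : (∑ i ∈ Finset.Ioo u k, vmax W a' i k)
            = ((q:ℝ) - u) * B + ∑ i ∈ Finset.Ioo q k, vmax WR a' i k := by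
          rw [Ioo_eq_Ioc (by omega : 1 ≤ k),
            ← Finset.sum_Ioc_consecutive (fun i => vmax W a' i k) (le_of_lt hq1)
              (by omega : q ≤ k - 1)]
          congr 1
          · rw [Finset.sum_congr rfl fun i hi =>
              hcr' i hi k (Finset.mem_Ioc.2 ⟨hqk, hk2⟩),
              Finset.sum_const, nsmul_eq_mul, card_Ioc_real (le_of_lt hq1)]
          · rw [← Ioo_eq_Ioc (by omega : 1 ≤ k)]
            exact Finset.sum_congr rfl fun i hi => by
              rw [vmax, vmax, hwsetR i k (Finset.mem_Ioo.1 hi).1]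
        rw [hrow, hcol] at h
        rw [hlelR]
        linarith
      rcases lt_trichotomy c q with h | h | h
      · rw [haLeq c h]
        exact huniqL a' (fun d hd => ha'0 d ((hWLmem d).1 hd).1) hcondL' c ((hWLmem c).2 ⟨hc, h⟩)
      · rw [h, haq, ha'q]
      · rw [haReq c h]
        exact huniqR a' (fun d hd => ha'0 d ((hWRmem d).1 hd).1) hcondR' c ((hWRmem c).2 ⟨hc, h⟩)

end Stmt18Aux

theorem stmt18 (n l : ℕ) (hn : 2 ≤ n) (nseq : ℕ → ℕ)
    (h0 : nseq 0 = 0) (hlast : nseq (l + 1) = n)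
    (hmono : ∀ r, r ≤ l → nseq r < nseq (r + 1))
    (lam : ℕ → ℝ)
    (hblocks : ∀ k, 1 ≤ k → k + 1 ≤ n → (∀ r, r ≤ l + 1 → nseq r ≠ k) →
      lam k = lam (k + 1))
    (hdom : ∀ k, 1 ≤ k → k + 1 ≤ n → lam (k + 1) ≤ lam k)
    (ell : ℝ) (hell : ell = (∑ i ∈ Finset.Icc 1 n, lam i) / n) :
    ∃ f : ℕ → ℕ → ℝ, GPIdealFillingFor n l nseq lam ell f ∧
      ∀ g : ℕ → ℕ → ℝ, GPIdealFillingFor n l nseq lam ell g →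
        ∀ i j, InBP n l nseq i j → g i j = f i j := by
  classical
  set W : Finset ℕ := (Finset.Icc 1 l).image nseq with hWdef
  have hmono2 : ∀ s, s ≤ l + 1 → ∀ r, r < s → nseq r < nseq s := by
    intro s
    induction s with
    | zero => intro _ r hr; omega
    | succ m ih =>
        intro hs r hr
        have h1 : nseq m < nseq (m + 1) := hmono m (by omega)
        rcases Nat.lt_or_ge r m with h | h
        · exact lt_trans (ih (by omega) r h) h1
        · have hrm : r = m := by omega
          subst hrm; exact h1
  have hWmem : ∀ c, c ∈ W ↔ ∃ r, 1 ≤ r ∧ r ≤ l ∧ nseq r = c := by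
    intro c
    rw [hWdef, Finset.mem_image]
    constructor
    · rintro ⟨r, hr, rfl⟩
      have h := Finset.mem_Icc.1 hr
      exact ⟨r, h.1, h.2, rfl⟩
    · rintro ⟨r, h1, h2, rfl⟩
      exact ⟨r, Finset.mem_Icc.2 ⟨h1, h2⟩, rfl⟩
  have hWb : ∀ c ∈ W, 0 < c ∧ c < n := by
    intro c hc
    obtain ⟨r, h1, h2, rfl⟩ := (hWmem c).1 hc
    constructor
    · have h := hmono2 r (by omega) 0 (by omega)
      omega
    · have h := hmono2 (l + 1) le_rfl r (by omega)
      omega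
  have hn0 : 0 < n := by omega
  have hIff : ∀ i j, InBP n l nseq i j ↔
      (1 ≤ i ∧ i < j ∧ j ≤ n ∧ ∃ c ∈ W, i ≤ c ∧ c < j) := by
    intro i j
    constructor
    · rintro ⟨h1, h2, h3, r, hr, hr1, hr2⟩
      refine ⟨h1, h2, h3, nseq r, ?_, hr1, hr2⟩
      rw [hWmem]
      have hr0 : r ≠ 0 := by rintro rfl; rw [h0] at hr1; omega
      have hrl : r ≠ l + 1 := by rintro rfl; rw [hlast] at hr2; omega
      exact ⟨r, by omega, by omega, rfl⟩
    · rintro ⟨h1, h2, h3, c, hc, hci, hcj⟩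
      obtain ⟨r, hr1, hr2, rfl⟩ := (hWmem c).1 hc
      exact ⟨h1, h2, h3, r, by omega, hci, hcj⟩
  have hvm0 : ∀ (b : ℕ → ℝ) (i j : ℕ), 1 ≤ i → j ≤ n → ¬ InBP n l nseq i j →
      Stmt18Aux.vmax W b i j = 0 := by
    intro b i j h1 h3 hnot
    have hempty : Stmt18Aux.wset W i j = ∅ := by
      apply Finset.eq_empty_of_forall_notMem
      intro c hc
      rw [Stmt18Aux.wset, Finset.mem_filter] at hc
      rcases Nat.lt_or_ge i j with h2 | h2
      · exact hnot ((hIff i j).2 ⟨h1, h2, h3, c, hc.1, hc.2⟩)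
      · omega
    rw [Stmt18Aux.vmax, hempty]; rfl
  have hsplit : ∀ i j : ℕ, i + 2 ≤ j →
      Stmt18Aux.wset W i j = Stmt18Aux.wset W (i + 1) j ∪ Stmt18Aux.wset W i (j - 1) := by
    intro i j h
    ext c
    simp only [Stmt18Aux.wset, Finset.mem_filter, Finset.mem_union]
    constructor
    · rintro ⟨hcW, h1, h2⟩
      rcases Nat.lt_or_ge c (i + 1) with h3 | h3
      · right; exact ⟨hcW, h1, by omega⟩
      · left; exact ⟨hcW, h3, h2⟩
    · rintro (⟨hcW, h1, h2⟩ | ⟨hcW, h1, h2⟩)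
      · exact ⟨hcW, by omega, h2⟩
      · exact ⟨hcW, h1, by omega⟩
  have hvrec : ∀ (b : ℕ → ℝ) (i j : ℕ), i + 2 ≤ j → Stmt18Aux.vmax W b i j
      = max (Stmt18Aux.vmax W b (i + 1) j) (Stmt18Aux.vmax W b i (j - 1)) := by
    intro b i j h
    rw [Stmt18Aux.vmax, hsplit i j h, Stmt18Aux.vm_union]
    rfl
  obtain ⟨a, ha0, hcond, huniq⟩ := Stmt18Aux.core W.card W le_rfl 0 n hn0
    (fun c hc => hWb c hc) lam
    (fun k hk1 hk2 hkW => hblocks k hk1 hk2 (by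
      intro r hr heq
      rcases Nat.eq_zero_or_pos r with rfl | hr0
      · rw [h0] at heq; omega
      rcases Nat.lt_or_ge r (l + 1) with hrl | hrl
      · exact hkW ((hWmem k).2 ⟨r, by omega, by omega, heq⟩)
      · have hre : r = l + 1 := by omega
        subst hre; rw [hlast] at heq; omega))
    (fun k hk1 hk2 => hdom k hk1 hk2)
  have hIcc : Finset.Icc 1 n = Finset.Ioc 0 n := by
    ext x; simp only [Finset.mem_Icc, Finset.mem_Ioc]; omega
  have hell' : ell = Stmt18Aux.lellr lam 0 n := by
    rw [hell, Stmt18Aux.lellr, hIcc]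
    norm_num
  have hrow : ∀ (h : ℕ → ℕ → ℝ) (b : ℕ → ℝ),
      (∀ i j, InBP n l nseq i j → h i j = Stmt18Aux.vmax W b i j) →
      ∀ k, 1 ≤ k → k ≤ n →
      (∑ j ∈ Finset.Icc 1 n, if InBP n l nseq k j then h k j else 0)
        = ∑ j ∈ Finset.Ioc k n, Stmt18Aux.vmax W b k j := by
    intro h b hagree k hk1 hk2
    have h1 : ∑ j ∈ Finset.Icc 1 n, (if InBP n l nseq k j then h k j else 0)
        = ∑ j ∈ Finset.Ioc k n, (if InBP n l nseq k j then h k j else 0) := by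
      symm
      apply Finset.sum_subset
      · intro j hj; rw [Finset.mem_Ioc] at hj; rw [Finset.mem_Icc]; omega
      · intro j hj hj2
        rw [if_neg]
        intro hbp
        exact hj2 (Finset.mem_Ioc.2 ⟨hbp.2.1, hbp.2.2.1⟩)
    rw [h1]
    refine Finset.sum_congr rfl fun j hj => ?_
    rw [Finset.mem_Ioc] at hj
    by_cases hbp : InBP n l nseq k j
    · rw [if_pos hbp, hagree k j hbp]
    · rw [if_neg hbp, hvm0 b k j hk1 hj.2 hbp]
  have hcol : ∀ (h : ℕ → ℕ → ℝ) (b : ℕ → ℝ),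
      (∀ i j, InBP n l nseq i j → h i j = Stmt18Aux.vmax W b i j) →
      ∀ k, 1 ≤ k → k ≤ n →
      (∑ i ∈ Finset.Icc 1 n, if InBP n l nseq i k then h i k else 0)
        = ∑ i ∈ Finset.Ioo 0 k, Stmt18Aux.vmax W b i k := by
    intro h b hagree k hk1 hk2
    have h1 : ∑ i ∈ Finset.Icc 1 n, (if InBP n l nseq i k then h i k else 0)
        = ∑ i ∈ Finset.Ioo 0 k, (if InBP n l nseq i k then h i k else 0) := by
      symm
      apply Finset.sum_subset
      · intro i hi; rw [Finset.mem_Ioo] at hi; rw [Finset.mem_Icc]; omega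
      · intro i hi hi2
        rw [if_neg]
        intro hbp
        exact hi2 (Finset.mem_Ioo.2 ⟨hbp.1, hbp.2.1⟩)
    rw [h1]
    refine Finset.sum_congr rfl fun i hi => ?_
    rw [Finset.mem_Ioo] at hi
    by_cases hbp : InBP n l nseq i k
    · rw [if_pos hbp, hagree i k hbp]
    · rw [if_neg hbp, hvm0 b i k (by omega) hk2 hbp]
  refine ⟨fun i j => Stmt18Aux.vmax W a i j, ⟨⟨fun i j _ => Stmt18Aux.vm_nonneg a _, ?_⟩, ?_⟩, ?_⟩
  · -- recursion property
    intro i j hij h2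
    obtain ⟨h1, hlt, h3, -⟩ := (hIff i j).1 hij
    have hij2 : i + 2 ≤ j := by omega
    by_cases hA : InBP n l nseq (i + 1) j <;> by_cases hB : InBP n l nseq i (j - 1)
    · exact Or.inl ⟨hA, hB, hvrec a i j hij2⟩
    · refine Or.inr (Or.inl ⟨hA, hB, ?_⟩)
      show Stmt18Aux.vmax W a i j = Stmt18Aux.vmax W a (i + 1) j
      rw [hvrec a i j hij2, hvm0 a i (j - 1) h1 (by omega) hB]
      exact max_eq_left (Stmt18Aux.vm_nonneg a _)
    · refine Or.inr (Or.inr ⟨hA, hB, ?_⟩)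
      show Stmt18Aux.vmax W a i j = Stmt18Aux.vmax W a i (j - 1)
      rw [hvrec a i j hij2, hvm0 a (i + 1) j (by omega) h3 hA]
      exact max_eq_right (Stmt18Aux.vm_nonneg a _)
    · exfalso
      obtain ⟨-, -, -, c, hcW, hci, hcj⟩ := (hIff i j).1 hij
      rcases Nat.lt_or_ge c (i + 1) with h | h
      · exact hB ((hIff i (j - 1)).2 ⟨h1, by omega, by omega, c, hcW, hci, by omega⟩)
      · exact hA ((hIff (i + 1) j).2 ⟨by omega, by omega, h3, c, hcW, h, hcj⟩)
  · -- sum conditions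
    intro k hk1 hk2
    rw [hrow _ a (fun i j _ => rfl) k hk1 hk2, hcol _ a (fun i j _ => rfl) k hk1 hk2, hell']
    exact hcond k (Finset.mem_Ioc.2 ⟨by omega, hk2⟩)
  · -- uniqueness
    intro g hg i0 j0 hbp0
    obtain ⟨⟨hgnn, hgrec⟩, hgsum⟩ := hg
    set ag : ℕ → ℝ := fun c => g c (c + 1) with hagdef
    have hgv : ∀ m i j, j - i ≤ m → InBP n l nseq i j →
        g i j = Stmt18Aux.vmax W ag i j := by
      intro m
      induction m with
      | zero =>
          intro i j hji hbp
          obtain ⟨h1, h2, h3, -⟩ := (hIff i j).1 hbp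
          exact absurd hji (by omega)
      | succ m ih =>
          intro i j hji hbp
          obtain ⟨h1, h2, h3, c, hcW, hci, hcj⟩ := (hIff i j).1 hbp
          rcases Nat.lt_or_ge (j - i) 2 with hcase | hcase
          · have hji1 : j = i + 1 := by omega
            subst hji1
            have hci' : c = i := by omega
            subst hci'
            rw [Stmt18Aux.vmax, Stmt18Aux.wset_self hcW,
              Stmt18Aux.vm_singleton (a := ag) (c := c) (hgnn c (c + 1) hbp)]
          · rcases hgrec i j hbp hcase with ⟨hA, hB, heq⟩ | ⟨hA, hB, heq⟩ | ⟨hA, hB, heq⟩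
            · rw [heq, ih (i + 1) j (by omega) hA, ih i (j - 1) (by omega) hB,
                ← hvrec ag i j (by omega)]
            · rw [heq, ih (i + 1) j (by omega) hA, hvrec ag i j (by omega),
                hvm0 ag i (j - 1) h1 (by omega) hB]
              exact (max_eq_left (Stmt18Aux.vm_nonneg ag _)).symm
            · rw [heq, ih i (j - 1) (by omega) hB, hvrec ag i j (by omega),
                hvm0 ag (i + 1) j (by omega) h3 hA]
              exact (max_eq_right (Stmt18Aux.vm_nonneg ag _)).symm
    have hag0 : ∀ c ∈ W, 0 ≤ ag c := by
      intro c hc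
      obtain ⟨hc1, hc2⟩ := hWb c hc
      exact hgnn c (c + 1)
        ((hIff c (c + 1)).2 ⟨by omega, by omega, by omega, c, hc, le_rfl, by omega⟩)
    have hcondg : Stmt18Aux.Cond W ag 0 n lam := by
      intro k hk
      obtain ⟨hk1, hk2⟩ := Finset.mem_Ioc.1 hk
      have h := hgsum k (by omega) hk2
      rw [hrow g ag (fun i j hbp => hgv (j - i) i j le_rfl hbp) k (by omega) hk2,
        hcol g ag (fun i j hbp => hgv (j - i) i j le_rfl hbp) k (by omega) hk2,
        hell'] at h
      exact h
    have hags := huniq ag hag0 hcondg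
    rw [hgv (j0 - i0) i0 j0 le_rfl hbp0]
    exact Stmt18Aux.vm_congr fun c hc => hags c (Finset.mem_filter.1 hc).1
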